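/- arXiv:2211.07051 — 2 statements merged into one kernel-verified Lean document; each statement's English description precedes it below -/
import Mathlib

section
/- Let V: [0,1] → M₂(ℝ) be a real symmetric trace-zero matrix-function with ‖V‖_{L¹[0,1]} < ∞, let N solve N' = VN, N(0) = I, and set H = NᵀN. Then det(∫₀¹ H dx) - 1 ≤ C ‖V‖²_{L¹[0,1]} exp(C‖V‖_{L¹[0,1]}) for some absolute constant C > 0. -/
open MeasureTheory Matrix intervalIntegral

attribute [local instance] Matrix.normedAddCommGroup Matrix.normedSpace

instance : ContinuousENorm (Matrix (Fin 2) (Fin 2) ℝ) := SeminormedAddGroup.toContinuousENorm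

set_option maxHeartbeats 1000000

abbrev M2 := Matrix (Fin 2) (Fin 2) ℝ

instance : ENormedAddMonoid M2 := NormedAddCommGroup.toENormedAddCommMonoid.toENormedAddMonoid

instance : TopologicalSpace.PseudoMetrizableSpace M2 :=
  inferInstanceAs (TopologicalSpace.PseudoMetrizableSpace (Fin 2 → Fin 2 → ℝ))

noncomputable def eCLM (i j : Fin 2) : M2 →L[ℝ] ℝ :=
  LinearMap.mkContinuous (Matrix.entryLinearMap ℝ ℝ i j) 1
    (fun A => by simpa using A.norm_entry_le_entrywise_sup_norm)

lemma integral_entry {f : ℝ → M2} {s : Set ℝ}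
    (hf : IntegrableOn f s volume) (i j : Fin 2) :
    (∫ x in s, f x) i j = ∫ x in s, f x i j :=
  (ContinuousLinearMap.integral_comp_comm (eCLM i j) hf).symm

lemma integrable_entry {f : ℝ → M2} {s : Set ℝ}
    (hf : IntegrableOn f s volume) (i j : Fin 2) :
    IntegrableOn (fun x => f x i j) s volume :=
  (eCLM i j).integrable_comp hf

lemma norm_mul_le₂ (A B : M2) : ‖A * B‖ ≤ 2 * ‖A‖ * ‖B‖ := by
  have h : ∀ i j : Fin 2, ‖(A * B) i j‖ ≤ 2 * ‖A‖ * ‖B‖ := by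
    intro i j
    rw [Matrix.mul_apply, Fin.sum_univ_two]
    calc ‖A i 0 * B 0 j + A i 1 * B 1 j‖ ≤ ‖A i 0 * B 0 j‖ + ‖A i 1 * B 1 j‖ := norm_add_le _ _
      _ ≤ ‖A‖ * ‖B‖ + ‖A‖ * ‖B‖ := by
          rw [norm_mul, norm_mul]
          gcongr <;> first
            | exact A.norm_entry_le_entrywise_sup_norm
            | exact B.norm_entry_le_entrywise_sup_norm
      _ = 2 * ‖A‖ * ‖B‖ := by ring
  exact (Matrix.norm_le_iff (by positivity)).2 h

lemma norm_one_le₂ : ‖(1 : M2)‖ ≤ 1 := by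
  refine (Matrix.norm_le_iff one_pos.le).2 fun i j => ?_
  fin_cases i <;> fin_cases j <;> simp [Matrix.one_apply]

lemma gronwall (V N : ℝ → M2)
    (hN : ∀ x ∈ Set.Icc (0:ℝ) 1, N x = 1 + ∫ s in (0:ℝ)..x, V s * N s)
    {b : ℝ} (hb : b ∈ Set.Icc (0:ℝ) 1)
    (hInt : IntegrableOn (fun s => V s * N s) (Set.Ioc 0 b) volume)
    (hVb : IntegrableOn (fun s => ‖V s‖) (Set.Icc 0 b) volume)
    (hcont : ContinuousOn N (Set.Icc 0 b)) :
    ∀ x ∈ Set.Icc (0:ℝ) b, ‖N x‖ ≤ 4 * Real.exp (3 * ∫ s in Set.Ioc (0:ℝ) b, ‖V s‖) := by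
  set φ : ℝ → ℝ := fun x => ∫ s in Set.Ioc (0:ℝ) x, ‖V s‖ with hφdef
  have hφcont : ContinuousOn φ (Set.Icc 0 b) := continuousOn_primitive hVb
  have hφ0 : φ 0 = 0 := by simp [hφdef]
  have hIVN : ∀ c y : ℝ, 0 ≤ c → 0 ≤ y → c ≤ b → y ≤ b → IntervalIntegrable (fun s => V s * N s) volume c y := by
    intro c y hc hy0 hcb hy
    rcases le_total c y with h | h
    · rw [intervalIntegrable_iff_integrableOn_Ioc_of_le h]
      exact hInt.mono_set (Set.Ioc_subset_Ioc hc hy)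
    · refine IntervalIntegrable.symm ?_
      rw [intervalIntegrable_iff_integrableOn_Ioc_of_le h]
      exact hInt.mono_set (Set.Ioc_subset_Ioc hy0 hcb)
  have hIv : ∀ c y : ℝ, 0 ≤ c → 0 ≤ y → c ≤ b → y ≤ b → IntervalIntegrable (fun s => ‖V s‖) volume c y := by
    intro c y hc hy0 hcb hy
    rcases le_total c y with h | h
    · rw [intervalIntegrable_iff_integrableOn_Ioc_of_le h]
      exact (hVb.mono_set (Set.Ioc_subset_Icc_self.trans (Set.Icc_subset_Icc hc hy)))
    · refine IntervalIntegrable.symm ?_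
      rw [intervalIntegrable_iff_integrableOn_Ioc_of_le h]
      exact (hVb.mono_set (Set.Ioc_subset_Icc_self.trans
        (Set.Icc_subset_Icc hy0 hcb)))
  have hφint : ∀ c y : ℝ, 0 ≤ c → c ≤ y → y ≤ b → φ y - φ c = ∫ s in c..y, ‖V s‖ := by
    intro c y hc hcy hyb
    have h1 : φ c = ∫ s in (0:ℝ)..c, ‖V s‖ := (integral_of_le hc).symm
    have h2 : φ y = ∫ s in (0:ℝ)..y, ‖V s‖ := (integral_of_le (hc.trans hcy)).symm
    have h3 := integral_add_adjacent_intervals (hIv 0 c le_rfl hc (le_trans hc (hcy.trans hyb)) (hcy.trans hyb))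
      (hIv c y hc (hc.trans hcy) ((hcy.trans hyb)) hyb)
    rw [h1, h2, ← h3]; ring
  -- key doubling step
  have key : ∀ c x B : ℝ, 0 ≤ c → c ≤ x → x ≤ b → φ x - φ c ≤ 1/4 →
      ‖N c‖ ≤ B → ∀ y ∈ Set.Icc c x, ‖N y‖ ≤ 2 * B := by
    intro c x B hc hcx hxb hφq hNc
    obtain ⟨z, hz, hzmax⟩ := (isCompact_Icc (a := c) (b := x)).exists_isMaxOn
      (Set.nonempty_Icc.2 hcx)
      ((hcont.mono (Set.Icc_subset_Icc hc hxb)).norm)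
    set S := ‖N z‖ with hS
    have claim : ∀ y ∈ Set.Icc c x, ‖N y‖ ≤ B + S / 2 := by
      intro y hy
      have hy1 : y ∈ Set.Icc (0:ℝ) 1 := ⟨hc.trans hy.1, (hy.2.trans hxb).trans hb.2⟩
      have hc1 : c ∈ Set.Icc (0:ℝ) 1 := ⟨hc, hcx.trans (hxb.trans hb.2)⟩
      have hNy := hN y hy1
      have hNc' := hN c hc1
      have hadd := integral_add_adjacent_intervals (hIVN 0 c le_rfl hc (le_trans hc (hcx.trans hxb)) (hcx.trans hxb))
        (hIVN c y hc (hc.trans hy.1) (hcx.trans hxb) (hy.2.trans hxb))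
      have hNyc : N y = N c + ∫ s in c..y, V s * N s := by
        rw [hNy, hNc', ← hadd]; abel
      have hnorm1 : ‖∫ s in c..y, V s * N s‖ ≤ ∫ s in c..y, 2 * S * ‖V s‖ := by
        calc ‖∫ s in c..y, V s * N s‖ ≤ ∫ s in c..y, ‖V s * N s‖ :=
              norm_integral_le_integral_norm hy.1
          _ ≤ ∫ s in c..y, 2 * S * ‖V s‖ := by
              apply integral_mono_on hy.1
              · exact ((hIVN c y hc (hc.trans hy.1) (hcx.trans hxb) (hy.2.trans hxb)).norm)
              · exact ((hIv c y hc (hc.trans hy.1) (hcx.trans hxb) (hy.2.trans hxb)).const_mul _)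
              · intro s hs
                calc ‖V s * N s‖ ≤ 2 * ‖V s‖ * ‖N s‖ := norm_mul_le₂ _ _
                  _ ≤ 2 * ‖V s‖ * S := by
                      have := hzmax ⟨hs.1, hs.2.trans hy.2⟩
                      gcongr
                      exact this
                  _ = 2 * S * ‖V s‖ := by ring
      have hnorm2 : ∫ s in c..y, 2 * S * ‖V s‖ ≤ S / 2 := by
        rw [intervalIntegral.integral_const_mul]
        have h1 : ∫ s in c..y, ‖V s‖ = φ y - φ c :=
          (hφint c y hc hy.1 (hy.2.trans hxb)).symm
        have hφmono : φ y ≤ φ x := by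
          have := hφint y x (hc.trans hy.1) hy.2 hxb
          have hnn : 0 ≤ ∫ s in y..x, ‖V s‖ :=
            intervalIntegral.integral_nonneg hy.2 (fun s _ => norm_nonneg _)
          linarith
        have hSnn : 0 ≤ S := norm_nonneg _
        rw [h1]
        nlinarith
      calc ‖N y‖ ≤ ‖N c‖ + ‖∫ s in c..y, V s * N s‖ := by
            rw [hNyc]; exact norm_add_le _ _
        _ ≤ B + S / 2 := by
            have := hnorm1.trans hnorm2
            linarith
    have hSle : S ≤ 2 * B := by
      have := claim z hz
      linarith
    intro y hy
    exact (hzmax hy).trans hSle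
  -- induction
  have ind : ∀ j : ℕ, ∀ x ∈ Set.Icc (0:ℝ) b, φ x ≤ j / 4 → ‖N x‖ ≤ 2 ^ (j + 1) := by
    intro j
    induction j with
    | zero =>
      intro x hx hφx
      have hN0 : ‖N 0‖ ≤ 1 := by
        have h0 := hN 0 ⟨le_rfl, one_pos.le⟩
        simp only [intervalIntegral.integral_same] at h0
        rw [h0, add_zero]
        exact norm_one_le₂
      have := key 0 x 1 le_rfl hx.1 hx.2 (by rw [hφ0]; simpa using hφx.trans (by norm_num))
        hN0 x ⟨hx.1, le_rfl⟩
      simpa using this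
    | succ j ih =>
      intro x hx hφx
      rcases le_or_gt (φ x) (j / 4) with h | h
      · exact (ih x hx h).trans (by
          have : (2:ℝ) ^ (j+1) ≤ 2 ^ (j+2) := by
            apply pow_le_pow_right₀ one_le_two
            omega
          exact this)
      · have hIVT := intermediate_value_Icc hx.1 (hφcont.mono (Set.Icc_subset_Icc le_rfl hx.2))
        have hmem : (j / 4 : ℝ) ∈ Set.Icc (φ 0) (φ x) := ⟨by rw [hφ0]; positivity, h.le⟩
        obtain ⟨c, hc, hφc⟩ := hIVT hmem
        have hNc : ‖N c‖ ≤ 2 ^ (j + 1) := ih c ⟨hc.1, hc.2.trans hx.2⟩ (le_of_eq hφc)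
        have := key c x (2 ^ (j+1)) hc.1 hc.2 hx.2 (by rw [hφc]; push_cast at hφx ⊢; linarith)
          hNc x ⟨hc.2, le_rfl⟩
        calc ‖N x‖ ≤ 2 * 2 ^ (j + 1) := this
          _ = 2 ^ (j + 2) := by ring
  -- conclude
  intro x hx
  set Kb := ∫ s in Set.Ioc (0:ℝ) b, ‖V s‖ with hKb
  have hKb0 : 0 ≤ Kb := setIntegral_nonneg measurableSet_Ioc (fun s _ => norm_nonneg _)
  have hφxKb : φ x ≤ Kb := by
    have := hφint x b hx.1 hx.2 le_rfl
    have hnn : 0 ≤ ∫ s in x..b, ‖V s‖ :=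
      intervalIntegral.integral_nonneg hx.2 (fun s _ => norm_nonneg _)
    have hφb : φ b = Kb := rfl
    linarith
  set j := ⌈4 * Kb⌉₊ with hj
  have h1 : ‖N x‖ ≤ 2 ^ (j + 1) := ind j x hx (by
    have : 4 * Kb ≤ j := Nat.le_ceil _
    linarith)
  have h2 : (2:ℝ) ^ (j + 1) ≤ 4 * Real.exp (3 * Kb) := by
    have hjle : (j : ℝ) ≤ 4 * Kb + 1 := (Nat.ceil_lt_add_one (by positivity)).le
    have e1 : (2:ℝ) ^ (j + 1) = 2 * 2 ^ (j:ℝ) := by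
      rw [← Real.rpow_natCast 2 (j+1)]
      push_cast
      rw [Real.rpow_add two_pos, Real.rpow_one]
      ring
    rw [e1]
    have e2 : (2:ℝ) ^ (j:ℝ) ≤ 2 ^ (4 * Kb + 1) :=
      Real.rpow_le_rpow_of_exponent_le one_le_two hjle
    have e3 : (2:ℝ) ^ (4 * Kb + 1) = 2 * Real.exp ((4 * Kb) * Real.log 2) := by
      rw [Real.rpow_add two_pos, Real.rpow_one, Real.rpow_def_of_pos two_pos]
      ring_nf
    have e4 : Real.exp ((4 * Kb) * Real.log 2) ≤ Real.exp (3 * Kb) := by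
      apply Real.exp_le_exp.2
      have hl : Real.log 2 ≤ 3/4 := by
        have := Real.log_two_lt_d9
        linarith
      nlinarith
    calc 2 * (2:ℝ) ^ (j:ℝ) ≤ 2 * (2:ℝ) ^ (4 * Kb + 1) := by linarith
      _ = 4 * Real.exp ((4 * Kb) * Real.log 2) := by rw [e3]; ring
      _ ≤ 4 * Real.exp (3 * Kb) := by linarith
  exact h1.trans h2

lemma Ncont (V N : ℝ → M2)
    (hN : ∀ x ∈ Set.Icc (0:ℝ) 1, N x = 1 + ∫ s in (0:ℝ)..x, V s * N s)
    {b : ℝ} (hb : b ∈ Set.Icc (0:ℝ) 1)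
    (hInt : IntegrableOn (fun s => V s * N s) (Set.Icc 0 b) volume) :
    ContinuousOn N (Set.Icc 0 b) := by
  have h := continuousOn_primitive (f := fun s => V s * N s) (a := 0) (b := b)
    (μ := volume) hInt
  refine ContinuousOn.congr (f := fun x => (1:M2) + ∫ t in Set.Ioc (0:ℝ) x, V t * N t)
    (continuousOn_const.add h) ?_
  intro x hx
  rw [hN x ⟨hx.1, hx.2.trans hb.2⟩, integral_of_le hx.1]

lemma bootstrap (V N : ℝ → M2)
    (hV : IntegrableOn V (Set.Icc (0:ℝ) 1) volume)
    (hN : ∀ x ∈ Set.Icc (0:ℝ) 1, N x = 1 + ∫ s in (0:ℝ)..x, V s * N s) :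
    IntegrableOn (fun s => V s * N s) (Set.Ioc (0:ℝ) 1) volume := by
  by_contra hbad
  set Bad := {x : ℝ | x ∈ Set.Icc (0:ℝ) 1 ∧
    ¬ IntegrableOn (fun s => V s * N s) (Set.Ioc 0 x) volume} with hBadDef
  have h1Bad : (1:ℝ) ∈ Bad := ⟨⟨zero_le_one, le_rfl⟩, hbad⟩
  have hBadbdd : BddBelow Bad := ⟨0, fun x hx => hx.1.1⟩
  set a := sInf Bad with ha
  have ha0 : 0 ≤ a := le_csInf ⟨1, h1Bad⟩ (fun x hx => hx.1.1)
  have ha1 : a ≤ 1 := csInf_le hBadbdd h1Bad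
  have hgood : ∀ y, 0 ≤ y → y < a → IntegrableOn (fun s => V s * N s) (Set.Ioc 0 y) volume := by
    intro y hy0 hya
    by_contra hy
    have hmem : y ∈ Bad := ⟨⟨hy0, le_trans hya.le ha1⟩, hy⟩
    exact absurd (csInf_le hBadbdd hmem) (not_le.2 hya)
  have hbadabove : ∀ y, a < y → y ≤ 1 →
      ¬ IntegrableOn (fun s => V s * N s) (Set.Ioc 0 y) volume := by
    intro y hay hy1 hint
    have hlb : ∀ x ∈ Bad, y ≤ x := by
      intro x hx
      by_contra hxy
      push_neg at hxy
      exact hx.2 (hint.mono_set (Set.Ioc_subset_Ioc le_rfl hxy.le))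
    exact absurd (le_csInf ⟨1, h1Bad⟩ hlb) (not_le.2 hay)
  have hNone : ∀ y, a < y → y ≤ 1 → N y = 1 := by
    intro y hay hy1
    have h0y : (0:ℝ) ≤ y := le_trans ha0 hay.le
    have h := hN y ⟨h0y, hy1⟩
    rw [integral_of_le h0y] at h
    rw [h, integral_undef (hbadabove y hay hy1), add_zero]
  have hconty : ∀ y, 0 ≤ y → y < a → ContinuousOn N (Set.Icc 0 y) := fun y hy0 hya =>
    Ncont V N hN ⟨hy0, hya.le.trans ha1⟩
      ((integrableOn_Icc_iff_integrableOn_Ioc (f := fun s => V s * N s) (a := 0) enorm_ne_top).2 (hgood y hy0 hya))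
  set K := ∫ x in Set.Icc (0:ℝ) 1, ‖V x‖ with hK
  set M := 4 * Real.exp (3 * K) with hM
  have hM1 : 1 ≤ M := by
    rw [hM]
    have hK0 : 0 ≤ K := setIntegral_nonneg measurableSet_Icc (fun s _ => norm_nonneg _)
    nlinarith [Real.one_le_exp (by positivity : (0:ℝ) ≤ 3 * K)]
  have hbound : ∀ x, 0 ≤ x → x < a → ‖N x‖ ≤ M := by
    intro x hx0 hxa
    have hx1 : x ≤ 1 := hxa.le.trans ha1
    have h := gronwall V N hN ⟨hx0, hx1⟩ (hgood x hx0 hxa)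
      (MeasureTheory.IntegrableOn.mono_set hV.norm (Set.Icc_subset_Icc le_rfl hx1))
      (hconty x hx0 hxa) x ⟨hx0, le_rfl⟩
    refine h.trans ?_
    rw [hM]
    have hmono : ∫ s in Set.Ioc (0:ℝ) x, ‖V s‖ ≤ K := by
      apply setIntegral_mono_set hV.norm
      · exact Filter.Eventually.of_forall (fun s => norm_nonneg _)
      · exact HasSubset.Subset.eventuallyLE (fun s hs => ⟨hs.1.le, hs.2.trans hx1⟩)
    gcongr
  have hcontIco : ContinuousOn N (Set.Ico 0 a) := by
    intro x hx
    have hxy : x < (x + a)/2 := by linarith [hx.2]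
    have hya : (x + a)/2 < a := by linarith [hx.2]
    have h := (hconty ((x+a)/2) (by linarith [hx.1]) hya) x ⟨hx.1, hxy.le⟩
    refine h.mono_of_mem_nhdsWithin ?_
    refine mem_nhdsWithin.2 ⟨Set.Iio ((x+a)/2), isOpen_Iio, hxy, ?_⟩
    rintro z ⟨hz1, hz2⟩
    exact ⟨hz2.1, le_of_lt hz1⟩
  have hxne : ∀ᵐ x : ℝ ∂(volume.restrict (Set.Icc a 1)), x ≠ a := by
    refine ae_restrict_of_ae ?_
    rw [ae_iff]
    refine measure_mono_null ?_ (measure_singleton a)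
    intro x hx
    simp only [ne_eq, not_not, Set.mem_setOf_eq] at hx
    exact Set.mem_singleton_iff.2 hx
  have haesmN : AEStronglyMeasurable N (volume.restrict (Set.Ioc 0 1)) := by
    have h1 : AEStronglyMeasurable N (volume.restrict (Set.Ioo 0 a)) :=
      (hcontIco.mono Set.Ioo_subset_Ico_self).aestronglyMeasurable measurableSet_Ioo
    have h2 : AEStronglyMeasurable N (volume.restrict (Set.Icc a 1)) := by
      refine (aestronglyMeasurable_const (b := (1 : M2))).congr ?_
      filter_upwards [ae_restrict_mem measurableSet_Icc, hxne] with x hx hxa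
      exact (hNone x (lt_of_le_of_ne hx.1 (Ne.symm hxa)) hx.2).symm
    have h12 : AEStronglyMeasurable N (volume.restrict (Set.Ioo 0 a ∪ Set.Icc a 1)) :=
      aestronglyMeasurable_union_iff.2 ⟨h1, h2⟩
    refine h12.mono_measure (Measure.restrict_mono ?_ le_rfl)
    intro x hx
    rcases lt_or_ge x a with h | h
    · exact Or.inl ⟨hx.1, h⟩
    · exact Or.inr ⟨h, hx.2⟩
  have haesmVN : AEStronglyMeasurable (fun s => V s * N s) (volume.restrict (Set.Ioc 0 1)) := by
    exact ((hV.mono_set Set.Ioc_subset_Icc_self).aestronglyMeasurable).mul haesmN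
  have hxne' : ∀ᵐ x : ℝ ∂(volume.restrict (Set.Ioc (0:ℝ) 1)), x ≠ a := by
    refine ae_restrict_of_ae ?_
    rw [ae_iff]
    refine measure_mono_null ?_ (measure_singleton a)
    intro x hx
    simp only [ne_eq, not_not, Set.mem_setOf_eq] at hx
    exact Set.mem_singleton_iff.2 hx
  have hint1 : IntegrableOn (fun s => V s * N s) (Set.Ioc (0:ℝ) 1) volume := by
    refine Integrable.mono'
      (((MeasureTheory.IntegrableOn.mono_set hV.norm Set.Ioc_subset_Icc_self).const_mul (2 * M))) haesmVN ?_
    filter_upwards [ae_restrict_mem measurableSet_Ioc, hxne'] with x hx hxa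
    rcases lt_or_ge x a with h | h
    · calc ‖V x * N x‖ ≤ 2 * ‖V x‖ * ‖N x‖ := norm_mul_le₂ _ _
        _ ≤ 2 * ‖V x‖ * M := by gcongr; exact hbound x hx.1.le h
        _ = 2 * M * ‖V x‖ := by ring
    · have hax : a < x := lt_of_le_of_ne h (Ne.symm hxa)
      rw [hNone x hax hx.2, mul_one]
      have hVx : (0:ℝ) ≤ ‖V x‖ := norm_nonneg _
      nlinarith
  exact hbad hint1

lemma det_one_add_sub_one (P : M2) :
    (1 + P).det - 1 = Matrix.trace P + (P 0 0 * P 1 1 - P 0 1 * P 1 0) := by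
  rw [Matrix.det_fin_two, Matrix.trace_fin_two]
  simp [Matrix.add_apply, Matrix.one_apply]
  ring

lemma trace_setIntegral {f : ℝ → M2} {s : Set ℝ} (hf : IntegrableOn f s volume) :
    Matrix.trace (∫ x in s, f x) = ∫ x in s, Matrix.trace (f x) := by
  rw [Matrix.trace_fin_two, integral_entry hf 0 0, integral_entry hf 1 1, ← integral_add
    (integrable_entry hf 0 0) (integrable_entry hf 1 1)]
  refine integral_congr_ae (Filter.Eventually.of_forall fun x => ?_)
  exact (Matrix.trace_fin_two (f x)).symm

/-- Let `V : [0,1] → M₂(ℝ)` be symmetric trace-zero with `‖V‖_{L¹[0,1]} < ∞`, let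
`N` solve `N' = VN`, `N(0) = I`, and `H = NᵀN`. Then
`det(∫₀¹ H) - 1 ≤ C ‖V‖²_{L¹[0,1]} exp(C ‖V‖_{L¹[0,1]})` for an absolute `C > 0`. -/
theorem stmt_11 : ∃ C : ℝ, 0 < C ∧
    ∀ V N : ℝ → Matrix (Fin 2) (Fin 2) ℝ,
      IntegrableOn V (Set.Icc (0 : ℝ) 1) volume →
      (∀ x ∈ Set.Icc (0 : ℝ) 1, (V x)ᵀ = V x) →
      (∀ x ∈ Set.Icc (0 : ℝ) 1, (V x).trace = 0) →
      (∀ x ∈ Set.Icc (0 : ℝ) 1, N x = 1 + ∫ s in (0 : ℝ)..x, V s * N s) →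
      (∫ ξ in (0 : ℝ)..1, (N ξ)ᵀ * N ξ).det - 1 ≤
        C * (∫ x in Set.Icc (0 : ℝ) 1, ‖V x‖) ^ 2 *
          Real.exp (C * ∫ x in Set.Icc (0 : ℝ) 1, ‖V x‖) := by
  refine ⟨100000, by norm_num, ?_⟩
  intro V N hV hsymm htr hN
  set K := ∫ x in Set.Icc (0:ℝ) 1, ‖V x‖ with hK
  have hK0 : 0 ≤ K := setIntegral_nonneg measurableSet_Icc fun s _ => norm_nonneg _
  have hVN : IntegrableOn (fun s => V s * N s) (Set.Ioc (0:ℝ) 1) volume := bootstrap V N hV hN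
  have h01 : (0:ℝ) ∈ Set.Icc (0:ℝ) 1 := ⟨le_rfl, zero_le_one⟩
  have h11 : (1:ℝ) ∈ Set.Icc (0:ℝ) 1 := ⟨zero_le_one, le_rfl⟩
  have hNcont : ContinuousOn N (Set.Icc 0 1) :=
    Ncont V N hN h11 ((integrableOn_Icc_iff_integrableOn_Ioc (f := fun s => V s * N s) (a := 0) enorm_ne_top).2 hVN)
  set M := 4 * Real.exp (3 * K) with hM
  have hKIoc : ∫ s in Set.Ioc (0:ℝ) 1, ‖V s‖ = K := (integral_Icc_eq_integral_Ioc).symm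
  have hMpos : 0 < M := by positivity
  have hMbound : ∀ x ∈ Set.Icc (0:ℝ) 1, ‖N x‖ ≤ M := by
    intro x hx
    have h := gronwall V N hN h11 hVN hV.norm hNcont x hx
    rwa [hKIoc] at h
  set R : ℝ → M2 := fun x => ∫ s in Set.Ioc (0:ℝ) x, V s * N s with hR
  have hNR : ∀ x ∈ Set.Icc (0:ℝ) 1, N x = 1 + R x := by
    intro x hx; rw [hN x hx, integral_of_le hx.1]
  have hVint : ∀ x ∈ Set.Icc (0:ℝ) 1, ∫ s in Set.Ioc (0:ℝ) x, ‖V s‖ ≤ K := by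
    intro x hx
    rw [hK]
    apply setIntegral_mono_set hV.norm
    · exact Filter.Eventually.of_forall (fun s => norm_nonneg _)
    · exact HasSubset.Subset.eventuallyLE (fun s hs => ⟨hs.1.le, hs.2.trans hx.2⟩)
  have hRb : ∀ x ∈ Set.Icc (0:ℝ) 1, ‖R x‖ ≤ 2 * M * K := by
    intro x hx
    have hint : IntegrableOn (fun s => V s * N s) (Set.Ioc 0 x) volume :=
      hVN.mono_set (Set.Ioc_subset_Ioc le_rfl hx.2)
    calc ‖R x‖ ≤ ∫ s in Set.Ioc (0:ℝ) x, ‖V s * N s‖ := norm_integral_le_integral_norm _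
      _ ≤ ∫ s in Set.Ioc (0:ℝ) x, 2 * M * ‖V s‖ := by
          refine setIntegral_mono_on hint.norm
            ((MeasureTheory.IntegrableOn.mono_set hV.norm
              (Set.Ioc_subset_Icc_self.trans (Set.Icc_subset_Icc le_rfl hx.2))).const_mul _)
            measurableSet_Ioc (fun s hs => ?_)
          calc ‖V s * N s‖ ≤ 2 * ‖V s‖ * ‖N s‖ := norm_mul_le₂ _ _
            _ ≤ 2 * ‖V s‖ * M := by
                gcongr
                exact hMbound s ⟨hs.1.le, hs.2.trans hx.2⟩
            _ = 2 * M * ‖V s‖ := by ring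
      _ = 2 * M * ∫ s in Set.Ioc (0:ℝ) x, ‖V s‖ := MeasureTheory.integral_const_mul _ _
      _ ≤ 2 * M * K := by
          have h := mul_le_mul_of_nonneg_left (hVint x hx) (by positivity : (0:ℝ) ≤ 2 * M)
          linarith
  -- trace of R
  have htrR : ∀ x ∈ Set.Icc (0:ℝ) 1, |Matrix.trace (R x)| ≤ 8 * M * K * K := by
    intro x hx
    have hint : IntegrableOn (fun s => V s * N s) (Set.Ioc 0 x) volume :=
      hVN.mono_set (Set.Ioc_subset_Ioc le_rfl hx.2)
    have h1 : Matrix.trace (R x) = ∫ s in Set.Ioc (0:ℝ) x, Matrix.trace (V s * N s) :=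
      trace_setIntegral hint
    have h2 : ∀ s ∈ Set.Ioc (0:ℝ) x, Matrix.trace (V s * N s) = Matrix.trace (V s * R s) := by
      intro s hs
      have hs1 : s ∈ Set.Icc (0:ℝ) 1 := ⟨hs.1.le, hs.2.trans hx.2⟩
      rw [hNR s hs1, mul_add, mul_one, Matrix.trace_add, htr s hs1, zero_add]
    rw [h1, setIntegral_congr_fun measurableSet_Ioc h2]
    have hb : ∀ s ∈ Set.Ioc (0:ℝ) x, ‖Matrix.trace (V s * R s)‖ ≤ (8 * M * K) * ‖V s‖ := by
      intro s hs
      have hs1 : s ∈ Set.Icc (0:ℝ) 1 := ⟨hs.1.le, hs.2.trans hx.2⟩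
      have hRs := hRb s hs1
      have hmul : ‖V s * R s‖ ≤ 2 * ‖V s‖ * ‖R s‖ := norm_mul_le₂ _ _
      have he00 : |(V s * R s) 0 0| ≤ ‖V s * R s‖ := (V s * R s).norm_entry_le_entrywise_sup_norm
      have he11 : |(V s * R s) 1 1| ≤ ‖V s * R s‖ := (V s * R s).norm_entry_le_entrywise_sup_norm
      rw [Matrix.trace_fin_two, Real.norm_eq_abs]
      have hVs : (0:ℝ) ≤ ‖V s‖ := norm_nonneg _
      calc |(V s * R s) 0 0 + (V s * R s) 1 1| ≤ |(V s * R s) 0 0| + |(V s * R s) 1 1| :=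
            abs_add_le _ _
        _ ≤ 2 * (2 * ‖V s‖ * ‖R s‖) := by linarith
        _ ≤ (8 * M * K) * ‖V s‖ := by nlinarith
    calc |∫ s in Set.Ioc (0:ℝ) x, Matrix.trace (V s * R s)|
        ≤ ∫ s in Set.Ioc (0:ℝ) x, (8 * M * K) * ‖V s‖ := by
          rw [← Real.norm_eq_abs]
          refine norm_integral_le_of_norm_le
            ((MeasureTheory.IntegrableOn.mono_set hV.norm
              (Set.Ioc_subset_Icc_self.trans (Set.Icc_subset_Icc le_rfl hx.2))).const_mul _) ?_
          filter_upwards [ae_restrict_mem measurableSet_Ioc] with s hs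
          exact hb s hs
      _ = (8 * M * K) * ∫ s in Set.Ioc (0:ℝ) x, ‖V s‖ := MeasureTheory.integral_const_mul _ _
      _ ≤ 8 * M * K * K := by
          have h := mul_le_mul_of_nonneg_left (hVint x hx) (by positivity : (0:ℝ) ≤ 8 * M * K)
          linarith
  -- the matrix H and its integral
  have hHcont : ContinuousOn (fun x => (N x)ᵀ * N x) (Set.Icc (0:ℝ) 1) :=
    ((continuous_id.matrix_transpose).comp_continuousOn hNcont).mul hNcont
  have hEcont : ContinuousOn (fun x => (N x)ᵀ * N x - 1) (Set.Icc (0:ℝ) 1) :=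
    hHcont.sub continuousOn_const
  have hHint : IntegrableOn (fun x => (N x)ᵀ * N x) (Set.Ioc (0:ℝ) 1) volume :=
    (hHcont.integrableOn_Icc).mono_set Set.Ioc_subset_Icc_self
  have hEint : IntegrableOn (fun x => (N x)ᵀ * N x - 1) (Set.Ioc (0:ℝ) 1) volume :=
    (hEcont.integrableOn_Icc).mono_set Set.Ioc_subset_Icc_self
  set P : M2 := ∫ x in Set.Ioc (0:ℝ) 1, ((N x)ᵀ * N x - 1) with hP
  have hone : (∫ _ in Set.Ioc (0:ℝ) 1, (1 : M2)) = 1 := by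
    rw [setIntegral_const]
    simp
  have hAint : (∫ ξ in (0:ℝ)..1, (N ξ)ᵀ * N ξ) = 1 + P := by
    rw [integral_of_le zero_le_one, hP, integral_sub hHint (integrable_const _), hone]
    abel
  -- pointwise bounds for E
  have hEbound : ∀ s ∈ Set.Ioc (0:ℝ) 1, ‖(N s)ᵀ * N s - 1‖ ≤ 4*M*K + 8*(M*K)^2 := by
    intro s hs
    have hs1 : s ∈ Set.Icc (0:ℝ) 1 := ⟨hs.1.le, hs.2⟩
    have hRs := hRb s hs1
    have hE : (N s)ᵀ * N s - 1 = (R s)ᵀ + R s + (R s)ᵀ * R s := by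
      rw [hNR s hs1]
      rw [Matrix.transpose_add, Matrix.transpose_one]
      noncomm_ring
    rw [hE]
    have h1 : ‖(R s)ᵀ‖ = ‖R s‖ := Matrix.norm_transpose _
    have h2 : ‖(R s)ᵀ * R s‖ ≤ 2 * ‖R s‖ * ‖R s‖ := by
      have := norm_mul_le₂ ((R s)ᵀ) (R s)
      rwa [h1] at this
    calc ‖(R s)ᵀ + R s + (R s)ᵀ * R s‖ ≤ ‖(R s)ᵀ + R s‖ + ‖(R s)ᵀ * R s‖ := norm_add_le _ _
      _ ≤ (‖(R s)ᵀ‖ + ‖R s‖) + 2 * ‖R s‖ * ‖R s‖ := by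
          have := norm_add_le ((R s)ᵀ) (R s)
          linarith
      _ ≤ 4*M*K + 8*(M*K)^2 := by
          rw [h1]
          nlinarith [norm_nonneg (R s)]
  -- entry bounds for P
  have hPentry : ∀ i j : Fin 2, |P i j| ≤ 4*M*K + 8*(M*K)^2 := by
    intro i j
    rw [hP, integral_entry hEint i j, ← Real.norm_eq_abs]
    have hvol : (volume (Set.Ioc (0:ℝ) 1)).toReal = 1 := by simp
    calc ‖∫ x in Set.Ioc (0:ℝ) 1, ((N x)ᵀ * N x - 1) i j‖
        ≤ ∫ _ in Set.Ioc (0:ℝ) 1, (4*M*K + 8*(M*K)^2) := by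
          refine norm_integral_le_of_norm_le (integrable_const _) ?_
          filter_upwards [ae_restrict_mem measurableSet_Ioc] with s hs
          exact le_trans (((N s)ᵀ * N s - 1).norm_entry_le_entrywise_sup_norm) (hEbound s hs)
      _ = 4*M*K + 8*(M*K)^2 := by rw [setIntegral_const, measureReal_def, hvol, one_smul]
  -- trace bound for P
  have hPtrace : Matrix.trace P ≤ 16*M*K^2 + 16*(M*K)^2 := by
    rw [hP, trace_setIntegral hEint]
    have hb : ∀ s ∈ Set.Ioc (0:ℝ) 1, ‖Matrix.trace ((N s)ᵀ * N s - 1)‖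
        ≤ 16*M*K^2 + 16*(M*K)^2 := by
      intro s hs
      have hs1 : s ∈ Set.Icc (0:ℝ) 1 := ⟨hs.1.le, hs.2⟩
      have hRs := hRb s hs1
      have htrRs := htrR s hs1
      have hM1 : (1:ℝ) ≤ M := by
        rw [hM]; nlinarith [Real.one_le_exp (by positivity : (0:ℝ) ≤ 3*K)]
      have hE : (N s)ᵀ * N s - 1 = (R s)ᵀ + R s + (R s)ᵀ * R s := by
        rw [hNR s hs1, Matrix.transpose_add, Matrix.transpose_one]
        noncomm_ring
      rw [hE, Matrix.trace_add, Matrix.trace_add, Matrix.trace_transpose, Real.norm_eq_abs]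
      have h2 : ‖(R s)ᵀ * R s‖ ≤ 2 * ‖R s‖ * ‖R s‖ := by
        have h := norm_mul_le₂ ((R s)ᵀ) (R s)
        rwa [Matrix.norm_transpose] at h
      have htrQ : |Matrix.trace ((R s)ᵀ * R s)| ≤ 2 * (2 * ‖R s‖ * ‖R s‖) := by
        rw [Matrix.trace_fin_two]
        have he00 : |((R s)ᵀ * R s) 0 0| ≤ ‖(R s)ᵀ * R s‖ :=
          ((R s)ᵀ * R s).norm_entry_le_entrywise_sup_norm
        have he11 : |((R s)ᵀ * R s) 1 1| ≤ ‖(R s)ᵀ * R s‖ :=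
          ((R s)ᵀ * R s).norm_entry_le_entrywise_sup_norm
        calc |((R s)ᵀ * R s) 0 0 + ((R s)ᵀ * R s) 1 1|
            ≤ |((R s)ᵀ * R s) 0 0| + |((R s)ᵀ * R s) 1 1| := abs_add_le _ _
          _ ≤ 2 * (2 * ‖R s‖ * ‖R s‖) := by linarith
      calc |Matrix.trace (R s) + Matrix.trace (R s) + Matrix.trace ((R s)ᵀ * R s)|
          ≤ 2 * |Matrix.trace (R s)| + |Matrix.trace ((R s)ᵀ * R s)| := by
            have := abs_add_le (Matrix.trace (R s) + Matrix.trace (R s))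
              (Matrix.trace ((R s)ᵀ * R s))
            have := abs_add_le (Matrix.trace (R s)) (Matrix.trace (R s))
            linarith [abs_add_le (Matrix.trace (R s) + Matrix.trace (R s))
              (Matrix.trace ((R s)ᵀ * R s)), abs_add_le (Matrix.trace (R s)) (Matrix.trace (R s))]
        _ ≤ 16*M*K^2 + 16*(M*K)^2 := by nlinarith [norm_nonneg (R s), abs_nonneg (Matrix.trace (R s)), mul_self_le_mul_self (norm_nonneg (R s)) hRs]
    have hvol : (volume (Set.Ioc (0:ℝ) 1)).toReal = 1 := by simp
    calc (∫ s in Set.Ioc (0:ℝ) 1, Matrix.trace ((N s)ᵀ * N s - 1))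
        ≤ |∫ s in Set.Ioc (0:ℝ) 1, Matrix.trace ((N s)ᵀ * N s - 1)| := le_abs_self _
      _ ≤ ∫ _ in Set.Ioc (0:ℝ) 1, (16*M*K^2 + 16*(M*K)^2) := by
          rw [← Real.norm_eq_abs]
          refine norm_integral_le_of_norm_le (integrable_const _) ?_
          filter_upwards [ae_restrict_mem measurableSet_Ioc] with s hs
          exact hb s hs
      _ = 16*M*K^2 + 16*(M*K)^2 := by rw [setIntegral_const, measureReal_def, hvol, one_smul]
  -- determinant expansion
  have hdet : (∫ ξ in (0:ℝ)..1, (N ξ)ᵀ * N ξ).det - 1 =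
      Matrix.trace P + (P 0 0 * P 1 1 - P 0 1 * P 1 0) := by
    rw [hAint, det_one_add_sub_one]
  rw [hdet]
  -- final numeric estimate
  set β := 4*M*K + 8*(M*K)^2 with hβ
  have hβ0 : 0 ≤ β := by positivity
  have hquad : P 0 0 * P 1 1 - P 0 1 * P 1 0 ≤ 2 * β^2 := by
    have h00 := hPentry 0 0
    have h11 := hPentry 1 1
    have h01 := hPentry 0 1
    have h10 := hPentry 1 0
    have ha : |P 0 0 * P 1 1| ≤ β^2 := by
      rw [abs_mul]
      calc |P 0 0| * |P 1 1| ≤ β * β :=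
            mul_le_mul h00 h11 (abs_nonneg _) hβ0
        _ = β^2 := (sq β).symm
    have hb2 : |P 0 1 * P 1 0| ≤ β^2 := by
      rw [abs_mul]
      calc |P 0 1| * |P 1 0| ≤ β * β :=
            mul_le_mul h01 h10 (abs_nonneg _) hβ0
        _ = β^2 := (sq β).symm
    have l1 := le_abs_self (P 0 0 * P 1 1)
    have l2 := neg_abs_le (P 0 1 * P 1 0)
    linarith
  have hsum : Matrix.trace P + (P 0 0 * P 1 1 - P 0 1 * P 1 0)
      ≤ 16*M*K^2 + 16*(M*K)^2 + 2*β^2 := by linarith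
  refine hsum.trans ?_
  -- now pure arithmetic with M = 4 exp(3K)
  set t := Real.exp K with ht
  have ht1 : 1 ≤ t := Real.one_le_exp hK0
  have hKt : K ≤ t := by nlinarith [Real.add_one_le_exp K]
  have hM4 : M = 4*t^3 := by
    rw [hM, ht, show (3:ℝ)*K = (3:ℕ)*K by norm_num, Real.exp_nat_mul]
  rw [hβ, hM4]
  clear_value t K M β R P
  clear hsum hquad hPentry hPtrace hdet hAint hone hEbound hEint hHint hEcont hHcont htrR hRb hVint hNR hMbound hKIoc hVN hNcont hN htr hsymm hV
  have hp : ∀ m n : ℕ, m ≤ n → t^m ≤ t^n := fun m n h => pow_le_pow_right₀ ht1 h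
  have h3 : t^3 ≤ t^7 := hp 3 7 (by omega)
  have h6K : t^6*K ≤ t^7 := by
    have h66 : t^6*K ≤ t^6*t := by nlinarith [pow_nonneg (le_trans zero_le_one ht1) 6]
    calc t^6*K ≤ t^6*t := h66
      _ = t^7 := by ring
  have h314 : t^3 ≤ t^14 := hp 3 14 (by omega)
  have h614 : t^6 ≤ t^14 := hp 6 14 (by omega)
  have ht0 : 0 < t := lt_of_lt_of_le one_pos ht1
  have e1 : 16*t^3 + 128*t^6*K ≤ 144*t^7 := by nlinarith
  have s1 : (16*t^3 + 128*t^6*K)^2 ≤ 20736 * t^14 := by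
    have h0 : 0 ≤ 16*t^3 + 128*t^6*K := by positivity
    nlinarith [mul_self_le_mul_self h0 e1]
  have s2 : 64*t^3 + 256*t^6 + 2*(16*t^3+128*t^6*K)^2 ≤ 41792 * t^14 := by
    have a1 : 64*t^3 ≤ 64*t^14 := by linarith
    have a2 : 256*t^6 ≤ 256*t^14 := by linarith
    linarith
  calc 16*(4*t^3)*K^2 + 16*((4*t^3)*K)^2 + 2*(4*(4*t^3)*K + 8*((4*t^3)*K)^2)^2
      = K^2 * (64*t^3 + 256*t^6 + 2*(16*t^3+128*t^6*K)^2) := by ring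
    _ ≤ K^2 * (41792 * t^14) := mul_le_mul_of_nonneg_left s2 (sq_nonneg K)
    _ ≤ K^2 * (100000 * Real.exp (100000*K)) := by
        have ht14 : t^14 = Real.exp (14*K) := by
          rw [ht, ← Real.exp_nat_mul]; norm_num
        have hle : Real.exp (14*K) ≤ Real.exp (100000*K) :=
          Real.exp_le_exp.2 (by linarith)
        have h41 : (41792:ℝ)*t^14 ≤ 100000 * Real.exp (100000*K) := by
          rw [ht14]
          have := Real.exp_pos (100000*K)
          linarith
        exact mul_le_mul_of_nonneg_left h41 (sq_nonneg K)
    _ = 100000 * K^2 * Real.exp (100000*K) := by ring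
end

section
/- Let g: ℝ → ℂ be locally integrable and for k ∈ ℤ let I_k = [k, k+2] and ⟨g⟩_{I_k} the mean of g over I_k. Then ∑_{k ∈ ℤ} ∑_{j ≤ k} e^{-(k-j)} |⟨g⟩_{I_j} - ⟨g⟩_{I_k}|² ≤ C ∑_{s ∈ ℤ} ∫_{I_s} |g - ⟨g⟩_{I_s}|² dx for an absolute constant C > 0. -/
open MeasureTheory
open scoped ENNReal NNReal

/-- The mean of `g` over the interval `I_k = [k, k+2]`. -/
noncomputable def intervalMean (g : ℝ → ℂ) (k : ℤ) : ℂ :=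
  (2 : ℂ)⁻¹ * ∫ x in Set.Icc (k : ℝ) (k + 2), g x

namespace Stmt14

noncomputable def Ag (g : ℝ → ℂ) (s : ℤ) : ℝ≥0∞ :=
  ∫⁻ x in Set.Icc (s : ℝ) (s + 2), (‖g x - intervalMean g s‖₊ : ℝ≥0∞) ^ 2

lemma mul_le_sq_add_sq (x y : ℝ≥0∞) : x * y ≤ x ^ 2 + y ^ 2 := by
  rcases le_total x y with h | h
  · calc x * y ≤ y * y := mul_le_mul_left h y
      _ = y ^ 2 := (sq y).symm
      _ ≤ x ^ 2 + y ^ 2 := le_add_self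
  · calc x * y ≤ x * x := mul_le_mul_right h x
      _ = x ^ 2 := (sq x).symm
      _ ≤ x ^ 2 + y ^ 2 := self_le_add_right _ _

lemma sq_sum_le {ι : Type*} (F : Finset ι) (b : ι → ℝ≥0∞) :
    (∑ i ∈ F, b i) ^ 2 ≤ 2 * F.card * ∑ i ∈ F, b i ^ 2 := by
  have h1 : (∑ i ∈ F, b i) ^ 2 = ∑ i ∈ F, ∑ l ∈ F, b i * b l := by
    rw [sq, Finset.sum_mul_sum]
  rw [h1]
  calc ∑ i ∈ F, ∑ l ∈ F, b i * b l
      ≤ ∑ i ∈ F, ∑ l ∈ F, (b i ^ 2 + b l ^ 2) := by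
        gcongr with i hi l hl
        exact mul_le_sq_add_sq _ _
    _ = ∑ i ∈ F, ((F.card : ℝ≥0∞) * b i ^ 2 + ∑ l ∈ F, b l ^ 2) := by
        refine Finset.sum_congr rfl fun i _ => ?_
        rw [Finset.sum_add_distrib, Finset.sum_const, nsmul_eq_mul]
    _ = 2 * F.card * ∑ i ∈ F, b i ^ 2 := by
        rw [Finset.sum_add_distrib, Finset.sum_const, ← Finset.mul_sum, nsmul_eq_mul]
        ring

lemma sq_lintegral_le {α : Type*} [MeasurableSpace α] (μ : Measure α) (h : α → ℝ≥0∞)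
    (hm : AEMeasurable h μ) (hμ : μ Set.univ = 1) :
    (∫⁻ x, h x ∂μ) ^ 2 ≤ ∫⁻ x, h x ^ 2 ∂μ := by
  have hpq : (2 : ℝ).HolderConjugate 2 := ⟨by norm_num, by norm_num, by norm_num⟩
  have key := ENNReal.lintegral_mul_le_Lp_mul_Lq μ hpq hm
    (aemeasurable_const (b := (1:ℝ≥0∞)))
  simp only [Pi.mul_apply, mul_one, ENNReal.one_rpow, lintegral_const, hμ] at key
  have h2 : ∀ x : ℝ≥0∞, x ^ (2:ℝ) = x ^ 2 := fun x => by
    rw [← ENNReal.rpow_natCast x 2]; norm_num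
  calc (∫⁻ x, h x ∂μ) ^ 2
      ≤ ((∫⁻ x, h x ^ (2:ℝ) ∂μ) ^ (1/(2:ℝ))) ^ 2 := by
        gcongr
    _ = ∫⁻ x, h x ^ 2 ∂μ := by
        rw [← ENNReal.rpow_natCast _ 2, ← ENNReal.rpow_mul]
        norm_num

lemma mean_diff_sq (g : ℝ → ℂ) (c : ℂ) (a : ℝ)
    (hg : IntegrableOn g (Set.Icc a (a + 1)) volume) :
    (‖c - ∫ x in Set.Icc a (a + 1), g x‖₊ : ℝ≥0∞) ^ 2
      ≤ ∫⁻ x in Set.Icc a (a + 1), (‖g x - c‖₊ : ℝ≥0∞) ^ 2 := by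
  set μ := volume.restrict (Set.Icc a (a + 1)) with hμdef
  have hμ : μ Set.univ = 1 := by
    rw [hμdef, Measure.restrict_apply_univ, Real.volume_Icc]
    norm_num
  haveI : IsFiniteMeasure μ := ⟨by rw [hμ]; exact ENNReal.one_lt_top⟩
  have hgi : Integrable g μ := hg
  have hc : (∫ x, (c - g x) ∂μ) = c - ∫ x, g x ∂μ := by
    rw [integral_sub (integrable_const c) hgi, integral_const, measureReal_def, hμ]
    simp
  calc (‖c - ∫ x, g x ∂μ‖₊ : ℝ≥0∞) ^ 2
      = (‖∫ x, (c - g x) ∂μ‖₊ : ℝ≥0∞) ^ 2 := by rw [hc]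
    _ ≤ (∫⁻ x, (‖c - g x‖₊ : ℝ≥0∞) ∂μ) ^ 2 := by
        gcongr
        exact enorm_integral_le_lintegral_enorm _
    _ ≤ ∫⁻ x, (‖c - g x‖₊ : ℝ≥0∞) ^ 2 ∂μ :=
        sq_lintegral_le μ _ ((aestronglyMeasurable_const.sub hgi.1).enorm) hμ
    _ = ∫⁻ x, (‖g x - c‖₊ : ℝ≥0∞) ^ 2 ∂μ :=
        lintegral_congr fun x => by rw [← nnnorm_neg (c - g x), neg_sub]

lemma sq_add_le (x y : ℝ≥0∞) : (x + y) ^ 2 ≤ 4 * x ^ 2 + 4 * y ^ 2 := by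
  have h := mul_le_sq_add_sq x y
  calc (x + y) ^ 2 = x ^ 2 + y ^ 2 + (x * y + x * y) := by ring
    _ ≤ x ^ 2 + y ^ 2 + ((x ^ 2 + y ^ 2) + (x ^ 2 + y ^ 2)) := by gcongr
    _ = 3 * x ^ 2 + 3 * y ^ 2 := by ring
    _ ≤ 4 * x ^ 2 + 4 * y ^ 2 := by
        gcongr <;> norm_num

lemma step1 (g : ℝ → ℂ) (hg : LocallyIntegrable g volume) (s : ℤ) :
    (‖intervalMean g s - intervalMean g (s + 1)‖₊ : ℝ≥0∞) ^ 2
      ≤ 4 * Ag g s + 4 * Ag g (s + 1) := by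
  set q : ℂ := ∫ x in Set.Icc ((s : ℝ) + 1) ((s : ℝ) + 2), g x with hq
  have hI : ∀ b : ℝ, IntegrableOn g (Set.Icc b (b + 1)) volume :=
    fun b => hg.integrableOn_isCompact isCompact_Icc
  have e2 : (s : ℝ) + 1 + 1 = (s : ℝ) + 2 := by ring
  have h1 : (‖intervalMean g s - q‖₊ : ℝ≥0∞) ^ 2 ≤ Ag g s := by
    have h := mean_diff_sq g (intervalMean g s) ((s : ℝ) + 1) (hI _)
    rw [e2] at h
    refine h.trans ?_
    exact lintegral_mono_set (Set.Icc_subset_Icc (by linarith) le_rfl)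
  have h2 : (‖intervalMean g (s + 1) - q‖₊ : ℝ≥0∞) ^ 2 ≤ Ag g (s + 1) := by
    have h := mean_diff_sq g (intervalMean g (s + 1)) ((s : ℝ) + 1) (hI _)
    rw [e2] at h
    refine h.trans ?_
    have e3 : ((s + 1 : ℤ) : ℝ) = (s : ℝ) + 1 := by push_cast; ring
    simp only [Ag, e3]
    exact lintegral_mono_set (Set.Icc_subset_Icc le_rfl (by linarith))
  have tri : (‖intervalMean g s - intervalMean g (s + 1)‖₊ : ℝ≥0∞)
      ≤ (‖intervalMean g s - q‖₊ : ℝ≥0∞) + (‖intervalMean g (s + 1) - q‖₊ : ℝ≥0∞) := by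
    have e : intervalMean g s - intervalMean g (s + 1)
        = (intervalMean g s - q) - (intervalMean g (s + 1) - q) := by ring
    rw [e]
    exact_mod_cast nnnorm_sub_le _ _
  calc (‖intervalMean g s - intervalMean g (s + 1)‖₊ : ℝ≥0∞) ^ 2
      ≤ ((‖intervalMean g s - q‖₊ : ℝ≥0∞) + (‖intervalMean g (s + 1) - q‖₊ : ℝ≥0∞)) ^ 2 := by
        gcongr
    _ ≤ 4 * (‖intervalMean g s - q‖₊ : ℝ≥0∞) ^ 2
        + 4 * (‖intervalMean g (s + 1) - q‖₊ : ℝ≥0∞) ^ 2 := sq_add_le _ _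
    _ ≤ 4 * Ag g s + 4 * Ag g (s + 1) := by gcongr

lemma step2 (g : ℝ → ℂ) (hg : LocallyIntegrable g volume) {j k : ℤ} (hjk : j ≤ k) :
    (‖intervalMean g j - intervalMean g k‖₊ : ℝ≥0∞) ^ 2
      ≤ 16 * ((k - j).toNat : ℝ≥0∞) * ∑ i ∈ Finset.Icc j k, Ag g i := by
  set N : ℕ := (k - j).toNat with hN
  have hNk : j + (N : ℤ) = k := by omega
  have tel : intervalMean g j - intervalMean g k
      = ∑ n ∈ Finset.range N, (intervalMean g (j + n) - intervalMean g (j + n + 1)) := by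
    calc intervalMean g j - intervalMean g k
        = intervalMean g (j + ((0:ℕ) : ℤ)) - intervalMean g (j + (N : ℤ)) := by
          rw [hNk]; norm_num
      _ = ∑ n ∈ Finset.range N,
            (intervalMean g (j + n) - intervalMean g (j + ((n + 1 : ℕ) : ℤ))) :=
          (Finset.sum_range_sub' (fun n : ℕ => intervalMean g (j + n)) N).symm
      _ = ∑ n ∈ Finset.range N, (intervalMean g (j + n) - intervalMean g (j + n + 1)) := by
          refine Finset.sum_congr rfl fun n _ => ?_
          have e : j + ((n + 1 : ℕ) : ℤ) = j + n + 1 := by push_cast; ring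
          rw [e]
  have tri : (‖intervalMean g j - intervalMean g k‖₊ : ℝ≥0∞)
      ≤ ∑ n ∈ Finset.range N,
          (‖intervalMean g (j + n) - intervalMean g (j + n + 1)‖₊ : ℝ≥0∞) := by
    rw [tel]
    exact_mod_cast nnnorm_sum_le (Finset.range N)
      (fun n : ℕ => intervalMean g (j + n) - intervalMean g (j + n + 1))
  calc (‖intervalMean g j - intervalMean g k‖₊ : ℝ≥0∞) ^ 2
      ≤ (∑ n ∈ Finset.range N,
          (‖intervalMean g (j + n) - intervalMean g (j + n + 1)‖₊ : ℝ≥0∞)) ^ 2 := by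
        gcongr
    _ ≤ 2 * N * ∑ n ∈ Finset.range N,
          (‖intervalMean g (j + n) - intervalMean g (j + n + 1)‖₊ : ℝ≥0∞) ^ 2 := by
        simpa using sq_sum_le (Finset.range N) _
    _ ≤ 2 * N * ∑ n ∈ Finset.range N, (4 * Ag g (j + n) + 4 * Ag g (j + n + 1)) := by
        gcongr with n hn
        exact step1 g hg (j + n)
    _ = 2 * N * (4 * ∑ n ∈ Finset.range N, Ag g (j + n)
        + 4 * ∑ n ∈ Finset.range N, Ag g (j + n + 1)) := by
        rw [Finset.sum_add_distrib, Finset.mul_sum, Finset.mul_sum]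
    _ ≤ 2 * N * (4 * ∑ n ∈ Finset.range (N + 1), Ag g (j + n)
        + 4 * ∑ n ∈ Finset.range (N + 1), Ag g (j + n)) := by
        gcongr 2 * N * (4 * ?_ + 4 * ?_)
        · exact Finset.sum_le_sum_of_subset (Finset.range_subset_range.2 (Nat.le_succ N))
        · rw [Finset.sum_range_succ' (fun n : ℕ => Ag g (j + n)) N]
          refine le_trans (le_of_eq (Finset.sum_congr rfl fun n _ => ?_)) le_self_add
          have e : j + ((n + 1 : ℕ) : ℤ) = j + n + 1 := by push_cast; ring
          rw [e]
    _ = 16 * N * ∑ n ∈ Finset.range (N + 1), Ag g (j + n) := by ring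
    _ = 16 * N * ∑ i ∈ Finset.Icc j k, Ag g i := by
        congr 1
        have e : Finset.Icc j k
            = (Finset.range (N + 1)).map ⟨fun n : ℕ => j + (n : ℤ), fun a b h => by simp only [] at h; omega⟩ := by
          ext i
          simp only [Finset.mem_Icc, Finset.mem_map, Finset.mem_range,
            Function.Embedding.coeFn_mk]
          constructor
          · rintro ⟨h1, h2⟩
            exact ⟨(i - j).toNat, by omega, by show j + ((i - j).toNat : ℤ) = i; omega⟩
          · rintro ⟨n, hn, rfl⟩
            show j ≤ j + (n : ℤ) ∧ j + (n : ℤ) ≤ k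
            omega
        rw [e, Finset.sum_map]
        rfl

lemma tsum_int_ge (i : ℤ) (f : ℕ → ℝ≥0∞) :
    (∑' k : ℤ, if i ≤ k then f (k - i).toNat else 0) = ∑' n : ℕ, f n := by
  have hinj : Function.Injective (fun n : ℕ => i + (n : ℤ)) := by
    intro a b h
    simp only at h
    omega
  have hsupp : Function.support (fun k : ℤ => if i ≤ k then f (k - i).toNat else 0)
      ⊆ Set.range (fun n : ℕ => i + (n : ℤ)) := by
    intro x hx
    rcases le_or_gt i x with h | h
    · exact ⟨(x - i).toNat, by simp only []; omega⟩
    · simp [Function.mem_support, if_neg h.not_ge] at hx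
  calc (∑' k : ℤ, if i ≤ k then f (k - i).toNat else 0)
      = ∑' n : ℕ, (if i ≤ i + (n : ℤ) then f ((i + (n : ℤ)) - i).toNat else 0) :=
        (hinj.tsum_eq hsupp).symm
    _ = ∑' n : ℕ, f n := tsum_congr fun n => by
        rw [if_pos (by omega)]
        congr 1
        omega

lemma tsum_int_le (i : ℤ) (f : ℕ → ℝ≥0∞) :
    (∑' j : ℤ, if j ≤ i then f (i - j).toNat else 0) = ∑' n : ℕ, f n := by
  have hinj : Function.Injective (fun n : ℕ => i - (n : ℤ)) := by
    intro a b h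
    simp only at h
    omega
  have hsupp : Function.support (fun j : ℤ => if j ≤ i then f (i - j).toNat else 0)
      ⊆ Set.range (fun n : ℕ => i - (n : ℤ)) := by
    intro x hx
    rcases le_or_gt x i with h | h
    · exact ⟨(i - x).toNat, by simp only []; omega⟩
    · simp [Function.mem_support, if_neg h.not_ge] at hx
  calc (∑' j : ℤ, if j ≤ i then f (i - j).toNat else 0)
      = ∑' n : ℕ, (if i - (n : ℤ) ≤ i then f (i - (i - (n : ℤ))).toNat else 0) :=
        (hinj.tsum_eq hsupp).symm
    _ = ∑' n : ℕ, f n := tsum_congr fun n => by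
        rw [if_pos (by omega)]
        congr 1
        omega

lemma hpow_exp (m : ℕ) : ENNReal.ofReal (Real.exp (-(m : ℝ) / 2))
    = (ENNReal.ofReal (Real.exp (-(1/2 : ℝ)))) ^ m := by
  rw [← ENNReal.ofReal_pow (Real.exp_nonneg _)]
  congr 1
  rw [← Real.exp_nat_mul]
  congr 1
  ring

lemma cast_toNat {a b : ℤ} (h : a ≤ b) : (((b - a).toNat : ℝ)) = (b : ℝ) - a := by
  have h2 := Int.toNat_of_nonneg (show (0:ℤ) ≤ b - a by omega)
  have h3 := congrArg (fun z : ℤ => (z : ℝ)) h2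
  push_cast at h3
  linarith

lemma geom_ge (i : ℤ) :
    (∑' k : ℤ, if i ≤ k then ENNReal.ofReal (Real.exp (-((k : ℝ) - (i : ℝ)) / 2)) else 0)
      = (1 - ENNReal.ofReal (Real.exp (-(1/2 : ℝ))))⁻¹ := by
  have h : (∑' k : ℤ, if i ≤ k then ENNReal.ofReal (Real.exp (-((k : ℝ) - (i : ℝ)) / 2)) else 0)
      = ∑' k : ℤ, if i ≤ k then
          (fun m : ℕ => (ENNReal.ofReal (Real.exp (-(1/2 : ℝ)))) ^ m) (k - i).toNat else 0 := by
    refine tsum_congr fun k => ?_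
    split_ifs with hik
    · simp only []
      rw [← hpow_exp, cast_toNat hik]
    · rfl
  rw [h, tsum_int_ge, ENNReal.tsum_geometric]

lemma geom_le (i : ℤ) :
    (∑' j : ℤ, if j ≤ i then ENNReal.ofReal (Real.exp (-((i : ℝ) - (j : ℝ)) / 2)) else 0)
      = (1 - ENNReal.ofReal (Real.exp (-(1/2 : ℝ))))⁻¹ := by
  have h : (∑' j : ℤ, if j ≤ i then ENNReal.ofReal (Real.exp (-((i : ℝ) - (j : ℝ)) / 2)) else 0)
      = ∑' j : ℤ, if j ≤ i then
          (fun m : ℕ => (ENNReal.ofReal (Real.exp (-(1/2 : ℝ)))) ^ m) (i - j).toNat else 0 := by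
    refine tsum_congr fun j => ?_
    split_ifs with hij
    · simp only []
      rw [← hpow_exp, cast_toNat hij]
    · rfl
  rw [h, tsum_int_le, ENNReal.tsum_geometric]

end Stmt14

/-- For locally integrable `g : ℝ → ℂ`, with `I_k = [k, k+2]`,
`∑_{k ∈ ℤ} ∑_{j ≤ k} e^{-(k-j)} |⟨g⟩_{I_j} - ⟨g⟩_{I_k}|² ≤ C ∑_{s ∈ ℤ} ∫_{I_s} |g - ⟨g⟩_{I_s}|²`
for an absolute constant `C > 0` (all quantities taken in `[0,∞]`). -/
theorem stmt_14 : ∃ C : ℝ, 0 < C ∧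
    ∀ g : ℝ → ℂ, LocallyIntegrable g (volume : Measure ℝ) →
      (∑' k : ℤ, ∑' j : ℤ, if j ≤ k then
          ENNReal.ofReal (Real.exp (-(k - j : ℝ)) *
            ‖intervalMean g j - intervalMean g k‖ ^ 2) else 0) ≤
        ENNReal.ofReal C * ∑' s : ℤ, ∫⁻ x in Set.Icc (s : ℝ) (s + 2),
          (‖g x - intervalMean g s‖₊ : ℝ≥0∞) ^ 2 := by
  classical
  set r : ℝ≥0∞ := ENNReal.ofReal (Real.exp (-(1/2 : ℝ))) with hr
  set G : ℝ≥0∞ := (1 - r)⁻¹ with hGdef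
  have hr1 : r < 1 := by
    rw [hr, ENNReal.ofReal_lt_one, Real.exp_lt_one_iff]
    norm_num
  have hG : G ≠ ⊤ := by
    rw [hGdef, Ne, ENNReal.inv_eq_top]
    rw [tsub_eq_zero_iff_le]
    exact fun h => absurd h (not_le.2 hr1)
  have hK : (32 : ℝ≥0∞) * G * G ≠ ⊤ :=
    ENNReal.mul_ne_top (ENNReal.mul_ne_top (by norm_num) hG) hG
  refine ⟨((32 : ℝ≥0∞) * G * G).toReal + 1, by positivity, ?_⟩
  intro g hg
  have hAg : ∀ s : ℤ, (∫⁻ x in Set.Icc (s : ℝ) (s + 2),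
      (‖g x - intervalMean g s‖₊ : ℝ≥0∞) ^ 2) = Stmt14.Ag g s := fun s => rfl
  simp_rw [hAg]
  set U : ℤ → ℤ → ℝ≥0∞ := fun k i =>
    if i ≤ k then ENNReal.ofReal (Real.exp (-((k : ℝ) - (i : ℝ)) / 2)) else 0 with hU
  set V : ℤ → ℤ → ℝ≥0∞ := fun j i =>
    if j ≤ i then ENNReal.ofReal (Real.exp (-((i : ℝ) - (j : ℝ)) / 2)) else 0 with hV
  have key : ∀ k j : ℤ,
      (if j ≤ k then ENNReal.ofReal (Real.exp (-(k - j : ℝ)) *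
        ‖intervalMean g j - intervalMean g k‖ ^ 2) else 0)
      ≤ ∑' i : ℤ, U k i * (V j i * (32 * Stmt14.Ag g i)) := by
    intro k j
    split_ifs with hjk
    · have hw : ∀ i ∈ Finset.Icc j k,
          ENNReal.ofReal (Real.exp (-((k : ℝ) - (j : ℝ)))) *
            (16 * (((k - j).toNat : ℝ≥0∞))) * Stmt14.Ag g i
          ≤ U k i * (V j i * (32 * Stmt14.Ag g i)) := by
        intro i hi
        rw [Finset.mem_Icc] at hi
        obtain ⟨hji, hik⟩ := hi
        rw [hU, hV]
        simp only [if_pos hik, if_pos hji]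
        have hreal : Real.exp (-((k : ℝ) - (j : ℝ))) * (16 * (((k - j).toNat : ℝ)))
            ≤ Real.exp (-((k : ℝ) - (i : ℝ)) / 2) *
              (Real.exp (-((i : ℝ) - (j : ℝ)) / 2) * 32) := by
          set n : ℝ := (k : ℝ) - (j : ℝ) with hn
          have hnN : (((k - j).toNat : ℝ)) = n := Stmt14.cast_toNat hjk
          have h1 : Real.exp (-n) = Real.exp (-n/2) * Real.exp (-n/2) := by
            rw [← Real.exp_add]; congr 1; ring
          have h2 : n ≤ 2 * Real.exp (n/2) := by
            have := Real.add_one_le_exp (n/2)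
            linarith
          have h3 : Real.exp (n/2) * Real.exp (-n/2) = 1 := by
            rw [← Real.exp_add, show n/2 + -n/2 = 0 by ring, Real.exp_zero]
          have h4 : Real.exp (-((k : ℝ) - (i : ℝ)) / 2) * Real.exp (-((i : ℝ) - (j : ℝ)) / 2)
              = Real.exp (-n/2) := by
            rw [← Real.exp_add]; congr 1; ring
          have hchain : Real.exp (-n) * (16 * n) ≤ 32 * Real.exp (-n/2) := by
            have ha := Real.exp_pos (-n/2)
            calc Real.exp (-n) * (16 * n)
                = 16 * n * Real.exp (-n/2) * Real.exp (-n/2) := by rw [h1]; ring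
              _ ≤ 16 * (2 * Real.exp (n/2)) * Real.exp (-n/2) * Real.exp (-n/2) := by
                  have hb := Real.exp_pos (n/2)
                  nlinarith
              _ = 32 * (Real.exp (n/2) * Real.exp (-n/2)) * Real.exp (-n/2) := by ring
              _ = 32 * Real.exp (-n/2) := by rw [h3]; ring
          calc Real.exp (-n) * (16 * (((k - j).toNat : ℝ)))
              = Real.exp (-n) * (16 * n) := by rw [hnN]
            _ ≤ 32 * Real.exp (-n/2) := hchain
            _ = Real.exp (-((k : ℝ) - (i : ℝ)) / 2) *
                (Real.exp (-((i : ℝ) - (j : ℝ)) / 2) * 32) := by rw [← h4]; ring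
        have c1eq : ENNReal.ofReal (Real.exp (-((k : ℝ) - (j : ℝ))) * (16 * (((k - j).toNat : ℝ))))
            = ENNReal.ofReal (Real.exp (-((k : ℝ) - (j : ℝ)))) * (16 * (((k - j).toNat : ℝ≥0∞))) := by
          rw [ENNReal.ofReal_mul (Real.exp_nonneg _),
            ENNReal.ofReal_mul (by norm_num : (0:ℝ) ≤ 16), ENNReal.ofReal_natCast]
          norm_num
        have c2eq : ENNReal.ofReal (Real.exp (-((k : ℝ) - (i : ℝ)) / 2) *
              (Real.exp (-((i : ℝ) - (j : ℝ)) / 2) * 32))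
            = ENNReal.ofReal (Real.exp (-((k : ℝ) - (i : ℝ)) / 2)) *
              (ENNReal.ofReal (Real.exp (-((i : ℝ) - (j : ℝ)) / 2)) * 32) := by
          rw [ENNReal.ofReal_mul (Real.exp_nonneg _), ENNReal.ofReal_mul (Real.exp_nonneg _)]
          norm_num
        calc ENNReal.ofReal (Real.exp (-((k : ℝ) - (j : ℝ)))) *
              (16 * (((k - j).toNat : ℝ≥0∞))) * Stmt14.Ag g i
            ≤ ENNReal.ofReal (Real.exp (-((k : ℝ) - (i : ℝ)) / 2)) *
              (ENNReal.ofReal (Real.exp (-((i : ℝ) - (j : ℝ)) / 2)) * 32) * Stmt14.Ag g i := by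
              rw [← c1eq, ← c2eq]
              exact mul_le_mul_left (ENNReal.ofReal_le_ofReal hreal) _
          _ = ENNReal.ofReal (Real.exp (-((k : ℝ) - (i : ℝ)) / 2)) *
              (ENNReal.ofReal (Real.exp (-((i : ℝ) - (j : ℝ)) / 2)) * (32 * Stmt14.Ag g i)) := by
              ring
      calc ENNReal.ofReal (Real.exp (-(k - j : ℝ)) *
            ‖intervalMean g j - intervalMean g k‖ ^ 2)
          = ENNReal.ofReal (Real.exp (-(k - j : ℝ))) *
            (‖intervalMean g j - intervalMean g k‖₊ : ℝ≥0∞) ^ 2 := by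
            rw [ENNReal.ofReal_mul (Real.exp_nonneg _),
              ENNReal.ofReal_pow (norm_nonneg _), ofReal_norm, enorm_eq_nnnorm]
        _ ≤ ENNReal.ofReal (Real.exp (-(k - j : ℝ))) *
            (16 * (((k - j).toNat : ℝ≥0∞)) * ∑ i ∈ Finset.Icc j k, Stmt14.Ag g i) := by
            gcongr
            exact Stmt14.step2 g hg hjk
        _ = ∑ i ∈ Finset.Icc j k,
            ENNReal.ofReal (Real.exp (-((k : ℝ) - (j : ℝ)))) *
              (16 * (((k - j).toNat : ℝ≥0∞))) * Stmt14.Ag g i := by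
            rw [← mul_assoc, Finset.mul_sum]
        _ ≤ ∑ i ∈ Finset.Icc j k, U k i * (V j i * (32 * Stmt14.Ag g i)) :=
            Finset.sum_le_sum hw
        _ ≤ ∑' i : ℤ, U k i * (V j i * (32 * Stmt14.Ag g i)) :=
            ENNReal.sum_le_tsum _
    · exact zero_le'
  calc (∑' k : ℤ, ∑' j : ℤ, if j ≤ k then
        ENNReal.ofReal (Real.exp (-(k - j : ℝ)) *
          ‖intervalMean g j - intervalMean g k‖ ^ 2) else 0)
      ≤ ∑' k : ℤ, ∑' j : ℤ, ∑' i : ℤ, U k i * (V j i * (32 * Stmt14.Ag g i)) :=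
        Summable.tsum_le_tsum (fun k => Summable.tsum_le_tsum (fun j => key k j)
          ENNReal.summable ENNReal.summable) ENNReal.summable ENNReal.summable
    _ = ∑' i : ℤ, ∑' k : ℤ, ∑' j : ℤ, U k i * (V j i * (32 * Stmt14.Ag g i)) := by
        rw [show (∑' k : ℤ, ∑' j : ℤ, ∑' i : ℤ, U k i * (V j i * (32 * Stmt14.Ag g i)))
            = ∑' k : ℤ, ∑' i : ℤ, ∑' j : ℤ, U k i * (V j i * (32 * Stmt14.Ag g i)) from
          tsum_congr fun k => ENNReal.tsum_comm]
        exact ENNReal.tsum_comm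
    _ = ∑' i : ℤ, (∑' k : ℤ, U k i) * ((∑' j : ℤ, V j i) * (32 * Stmt14.Ag g i)) := by
        refine tsum_congr fun i => ?_
        calc ∑' k : ℤ, ∑' j : ℤ, U k i * (V j i * (32 * Stmt14.Ag g i))
            = ∑' k : ℤ, U k i * ∑' j : ℤ, (V j i * (32 * Stmt14.Ag g i)) :=
              tsum_congr fun k => ENNReal.tsum_mul_left
          _ = ∑' k : ℤ, U k i * ((∑' j : ℤ, V j i) * (32 * Stmt14.Ag g i)) :=
              tsum_congr fun k => by rw [ENNReal.tsum_mul_right]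
          _ = (∑' k : ℤ, U k i) * ((∑' j : ℤ, V j i) * (32 * Stmt14.Ag g i)) :=
              ENNReal.tsum_mul_right
    _ = ∑' i : ℤ, (32 * G * G) * Stmt14.Ag g i := by
        refine tsum_congr fun i => ?_
        rw [hU, hV, Stmt14.geom_ge i, Stmt14.geom_le i, ← hr, ← hGdef]
        ring
    _ = (32 * G * G) * ∑' i : ℤ, Stmt14.Ag g i := ENNReal.tsum_mul_left
    _ ≤ ENNReal.ofReal (((32 : ℝ≥0∞) * G * G).toReal + 1) * ∑' i : ℤ, Stmt14.Ag g i := by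
        gcongr
        conv_lhs => rw [← ENNReal.ofReal_toReal hK]
        exact ENNReal.ofReal_le_ofReal (by linarith)
end
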